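/- Let 1 ≤ p < ∞, σ ∈ ℝ, let X ⊆ ℓ^{σ,p} be invariant under the flow φ^t(z) = (e^{i ω_n(z) t} z_n)_{n≥1} generated by functions ω_n : X → ℝ (n ≥ 1). Suppose there are real constants (ω_n^∘)_{n≥1} such that for each z ∈ X the sequence ω^⋆(z) = (ω_n(z) − ω_n^∘)_{n≥1} is bounded, and the map z ↦ ω^⋆(z), from X into ℓ^∞ with the supremum norm, is uniformly continuous on bounded subsets of X. Then for every T > 0 the map S : X → C([−T,T], ℓ^{σ,p}), z ↦ (t ↦ φ^t(z)), is uniformly continuous on bounded subsets of X, where C([−T,T], ℓ^{σ,p}) carries the supremum norm. -/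

import Mathlib

/-- The weighted `ℓ^{σ,p}` norm of a complex sequence (indexed by `n ≥ 1`):
`‖z‖_{σ,p} = (∑_{n ≥ 1} n^{σp} |z_n|^p)^{1/p}`. -/
noncomputable def wnorm (σ p : ℝ) (z : ℕ → ℂ) : ℝ :=
  (∑' n : {n : ℕ // 1 ≤ n}, (n.1 : ℝ) ^ (σ * p) * ‖z n.1‖ ^ p) ^ (1 / p)

/-- Membership in `ℓ^{σ,p}`. -/
def MemW (σ p : ℝ) (z : ℕ → ℂ) : Prop :=
  Summable fun n : {n : ℕ // 1 ≤ n} => (n.1 : ℝ) ^ (σ * p) * ‖z n.1‖ ^ p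

lemma key (σ p : ℝ) (hp : 1 ≤ p) (d u v : ℕ → ℂ) (C : ℝ) (hC : 0 ≤ C)
    (hu : MemW σ p u) (hv : MemW σ p v)
    (h : ∀ n : ℕ, ‖d n‖ ≤ ‖u n‖ + C * ‖v n‖) :
    MemW σ p d ∧ wnorm σ p d ≤ wnorm σ p u + C * wnorm σ p v := by
  have hp0 : (0:ℝ) < p := lt_of_lt_of_le one_pos hp
  set f : {n : ℕ // 1 ≤ n} → ℝ := fun n => (n.1 : ℝ) ^ σ * ‖u n.1‖ with hf
  set g : {n : ℕ // 1 ≤ n} → ℝ := fun n => C * ((n.1 : ℝ) ^ σ * ‖v n.1‖) with hg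
  have hfn : ∀ n, 0 ≤ f n := fun n => by positivity
  have hgn : ∀ n, 0 ≤ g n := fun n => by positivity
  have hfp : ∀ n, f n ^ p = (n.1 : ℝ) ^ (σ * p) * ‖u n.1‖ ^ p := by
    intro n
    rw [hf, Real.mul_rpow (by positivity) (norm_nonneg _),
      ← Real.rpow_mul (Nat.cast_nonneg _)]
  have hgp : ∀ n, g n ^ p = C ^ p * ((n.1 : ℝ) ^ (σ * p) * ‖v n.1‖ ^ p) := by
    intro n
    rw [hg, Real.mul_rpow hC (by positivity), Real.mul_rpow (by positivity) (norm_nonneg _),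
      ← Real.rpow_mul (Nat.cast_nonneg _)]
  have hfs : Summable fun n => f n ^ p := by simp only [hfp]; exact hu
  have hgs : Summable fun n => g n ^ p := by
    simp only [hgp]; exact hv.mul_left _
  obtain ⟨hsum, hmink⟩ :=
    Real.Lp_add_le_tsum_of_nonneg hp hfn hgn hfs hgs
  have hdle : ∀ n : {n : ℕ // 1 ≤ n},
      (n.1 : ℝ) ^ (σ * p) * ‖d n.1‖ ^ p ≤ (f n + g n) ^ p := by
    intro n
    have h1 : (n.1 : ℝ) ^ σ * ‖d n.1‖ ≤ f n + g n := by
      have := h n.1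
      have h2 : (n.1 : ℝ) ^ σ * ‖d n.1‖ ≤ (n.1 : ℝ) ^ σ * (‖u n.1‖ + C * ‖v n.1‖) :=
        mul_le_mul_of_nonneg_left this (by positivity)
      calc (n.1 : ℝ) ^ σ * ‖d n.1‖ ≤ (n.1 : ℝ) ^ σ * (‖u n.1‖ + C * ‖v n.1‖) := h2
        _ = f n + g n := by rw [hf, hg]; ring
    calc (n.1 : ℝ) ^ (σ * p) * ‖d n.1‖ ^ p = ((n.1 : ℝ) ^ σ * ‖d n.1‖) ^ p := by
          rw [Real.mul_rpow (by positivity) (norm_nonneg _),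
            ← Real.rpow_mul (Nat.cast_nonneg _)]
      _ ≤ (f n + g n) ^ p :=
          Real.rpow_le_rpow (by positivity) h1 hp0.le
  have hmd : MemW σ p d :=
    Summable.of_nonneg_of_le (fun n => by positivity) hdle hsum
  refine ⟨hmd, ?_⟩
  have step1 : wnorm σ p d ≤ (∑' n, (f n + g n) ^ p) ^ (1 / p) :=
    Real.rpow_le_rpow (tsum_nonneg fun n => by positivity)
      (Summable.tsum_le_tsum hdle hmd hsum) (by positivity)
  have step2 : (∑' n, f n ^ p) ^ (1 / p) = wnorm σ p u := by
    unfold wnorm; congr 1; exact tsum_congr fun n => hfp n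
  have step3 : (∑' n, g n ^ p) ^ (1 / p) = C * wnorm σ p v := by
    unfold wnorm
    rw [show (fun n : {n : ℕ // 1 ≤ n} => g n ^ p)
        = fun n => C ^ p * ((n.1 : ℝ) ^ (σ * p) * ‖v n.1‖ ^ p) from funext hgp,
      tsum_mul_left, Real.mul_rpow (by positivity) (tsum_nonneg fun n => by positivity),
      ← Real.rpow_mul hC, mul_one_div, div_self hp0.ne', Real.rpow_one]
  calc wnorm σ p d ≤ (∑' n, (f n + g n) ^ p) ^ (1 / p) := step1
    _ ≤ (∑' n, f n ^ p) ^ (1 / p) + (∑' n, g n ^ p) ^ (1 / p) := hmink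
    _ = wnorm σ p u + C * wnorm σ p v := by rw [step2, step3]

lemma norm_exp_I_mul (a t : ℝ) : ‖Complex.exp (Complex.I * (a : ℂ) * (t : ℂ))‖ = 1 := by
  rw [show Complex.I * (a : ℂ) * (t : ℂ) = ((a * t : ℝ) : ℂ) * Complex.I by push_cast; ring]
  exact Complex.norm_exp_ofReal_mul_I _

lemma norm_exp_I_sub_one (x : ℝ) : ‖Complex.exp (((x : ℝ) : ℂ) * Complex.I) - 1‖ ≤ 2 * |x| := by
  rcases le_or_gt (|x|) 1 with h | h
  · have := Complex.norm_exp_sub_one_le (x := (x : ℂ) * Complex.I)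
      (by simpa using h)
    simpa using this
  · calc ‖Complex.exp ((x : ℂ) * Complex.I) - 1‖
        ≤ ‖Complex.exp ((x : ℂ) * Complex.I)‖ + ‖(1 : ℂ)‖ := norm_sub_le _ _
      _ = 2 := by rw [Complex.norm_exp_ofReal_mul_I]; norm_num
      _ ≤ 2 * |x| := by nlinarith

/-- Let `X ⊆ ℓ^{σ,p}` be invariant under the flow `φ^t(z) = (e^{i ω_n(z) t} z_n)_{n≥1}`.
Suppose there are real constants `(ω_n^∘)` such that `ω^⋆(z) = (ω_n(z) − ω_n^∘)_n` is
bounded for each `z ∈ X` and `z ↦ ω^⋆(z) ∈ ℓ^∞` is uniformly continuous on bounded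
subsets of `X`.  Then for every `T > 0` the solution map `S : X → C([−T,T], ℓ^{σ,p})`
(supremum norm) is uniformly continuous on bounded subsets of `X` (ε-δ form). -/
theorem stmt13 (p σ : ℝ) (hp : 1 ≤ p)
    (X : Set (ℕ → ℂ)) (hX : ∀ x ∈ X, MemW σ p x)
    (ω : ℕ → (ℕ → ℂ) → ℝ)
    (flow : ℝ → (ℕ → ℂ) → ℕ → ℂ)
    (hflow : ∀ (t : ℝ) (z : ℕ → ℂ) (n : ℕ),
      flow t z n = Complex.exp (Complex.I * (ω n z : ℂ) * (t : ℂ)) * z n)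
    (hinv : ∀ t : ℝ, ∀ z ∈ X, flow t z ∈ X)
    (ω₀ : ℕ → ℝ)
    (hbdd : ∀ z ∈ X, ∃ M : ℝ, ∀ n : ℕ, |ω n z - ω₀ n| ≤ M)
    (hUC : ∀ R > 0, ∀ ε > 0, ∃ δ > 0, ∀ z ∈ X, ∀ w ∈ X,
      wnorm σ p z ≤ R → wnorm σ p w ≤ R →
      wnorm σ p (fun m => z m - w m) < δ →
      ∀ n : ℕ, |(ω n z - ω₀ n) - (ω n w - ω₀ n)| ≤ ε) :
    ∀ T > 0, ∀ R > 0, ∀ ε > 0, ∃ δ > 0, ∀ z ∈ X, ∀ w ∈ X,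
      wnorm σ p z ≤ R → wnorm σ p w ≤ R →
      wnorm σ p (fun m => z m - w m) < δ →
      ∀ t : ℝ, |t| ≤ T → wnorm σ p (fun m => flow t z m - flow t w m) ≤ ε := by
  intro T hT R hR ε hε
  set ε' : ℝ := ε / (4 * T * R) with hε'def
  have hε' : 0 < ε' := by positivity
  obtain ⟨δ₁, hδ₁, H⟩ := hUC R hR ε' hε'
  refine ⟨min δ₁ (ε / 2), by positivity, ?_⟩
  intro z hz w hw hzR hwR hsmall t ht
  have hsδ₁ : wnorm σ p (fun m => z m - w m) < δ₁ :=
    lt_of_lt_of_le hsmall (min_le_left _ _)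
  have hωd : ∀ n : ℕ, |ω n z - ω n w| ≤ ε' := by
    intro n
    have := H z hz w hw hzR hwR hsδ₁ n
    have heq : (ω n z - ω₀ n) - (ω n w - ω₀ n) = ω n z - ω n w := by ring
    rwa [heq] at this
  -- pointwise bound
  have hpt : ∀ n : ℕ, ‖flow t z n - flow t w n‖ ≤
      ‖z n - w n‖ + (2 * T * ε') * ‖w n‖ := by
    intro n
    set a := ω n z
    set b := ω n w
    have hsplit : flow t z n - flow t w n =
        Complex.exp (Complex.I * (a : ℂ) * (t : ℂ)) * (z n - w n) +
        (Complex.exp (Complex.I * (a : ℂ) * (t : ℂ)) -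
          Complex.exp (Complex.I * (b : ℂ) * (t : ℂ))) * w n := by
      rw [hflow, hflow]; ring
    have h1 : ‖Complex.exp (Complex.I * (a : ℂ) * (t : ℂ)) * (z n - w n)‖
        = ‖z n - w n‖ := by
      rw [norm_mul, norm_exp_I_mul, one_mul]
    have h2 : ‖Complex.exp (Complex.I * (a : ℂ) * (t : ℂ)) -
        Complex.exp (Complex.I * (b : ℂ) * (t : ℂ))‖ ≤ 2 * T * ε' := by
      have hfact : Complex.exp (Complex.I * (a : ℂ) * (t : ℂ)) -
          Complex.exp (Complex.I * (b : ℂ) * (t : ℂ)) =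
          Complex.exp (Complex.I * (b : ℂ) * (t : ℂ)) *
            (Complex.exp ((((a - b) * t : ℝ) : ℂ) * Complex.I) - 1) := by
        rw [mul_sub, ← Complex.exp_add, mul_one]
        congr 1
        push_cast; ring
      rw [hfact, norm_mul, norm_exp_I_mul, one_mul]
      calc ‖Complex.exp ((((a - b) * t : ℝ) : ℂ) * Complex.I) - 1‖
          ≤ 2 * |(a - b) * t| := norm_exp_I_sub_one _
        _ = 2 * (|a - b| * |t|) := by rw [abs_mul]
        _ ≤ 2 * (ε' * T) := by
            have := hωd n
            have h0 : |a - b| * |t| ≤ ε' * T :=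
              mul_le_mul this ht (abs_nonneg _) hε'.le
            linarith
        _ = 2 * T * ε' := by ring
    calc ‖flow t z n - flow t w n‖
        ≤ ‖Complex.exp (Complex.I * (a : ℂ) * (t : ℂ)) * (z n - w n)‖ +
          ‖(Complex.exp (Complex.I * (a : ℂ) * (t : ℂ)) -
            Complex.exp (Complex.I * (b : ℂ) * (t : ℂ))) * w n‖ := by
          rw [hsplit]; exact norm_add_le _ _
      _ ≤ ‖z n - w n‖ + (2 * T * ε') * ‖w n‖ := by
          rw [h1, norm_mul]
          have := mul_le_mul_of_nonneg_right h2 (norm_nonneg (w n))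
          linarith
  -- membership of z - w
  have hmz := hX z hz
  have hmw := hX w hw
  have hmsub : MemW σ p (fun m => z m - w m) :=
    (key σ p hp (fun m => z m - w m) z w 1 zero_le_one hmz hmw
      (fun n => by simpa using norm_sub_le (z n) (w n))).1
  have hC : (0:ℝ) ≤ 2 * T * ε' := by positivity
  obtain ⟨-, hmain⟩ := key σ p hp (fun m => flow t z m - flow t w m)
    (fun m => z m - w m) w (2 * T * ε') hC hmsub hmw hpt
  have hwnn : 0 ≤ wnorm σ p w := Real.rpow_nonneg (tsum_nonneg fun n => by positivity) _
  have hbound2 : (2 * T * ε') * wnorm σ p w ≤ 2 * T * ε' * R :=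
    mul_le_mul_of_nonneg_left hwR hC
  have hkey : 2 * T * ε' * R = ε / 2 := by
    rw [hε'def]; field_simp; ring
  have hsε : wnorm σ p (fun m => z m - w m) ≤ ε / 2 :=
    le_of_lt (lt_of_lt_of_le hsmall (min_le_right _ _))
  calc wnorm σ p (fun m => flow t z m - flow t w m)
      ≤ wnorm σ p (fun m => z m - w m) + (2 * T * ε') * wnorm σ p w := hmain
    _ ≤ ε / 2 + ε / 2 := by rw [hkey] at hbound2; linarith
    _ = ε := by ring
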